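/- (S-lemma) Let q(x) = xᵀAx + 2bᵀx + c be a quadratic function on ℝⁿ that is strictly positive at some point, and let D = {x : q(x) ≥ 0}. Then a quadratic function h(x) = xᵀPx + 2rᵀx + s satisfies h(x) ≥ 0 for all x ∈ D if and only if there exists η ≥ 0 such that M(h) − ηM(q) ⪰ 0, where M(q) = [[A, b],[bᵀ, c]] is the matrix representation. -/

import Mathlib

open scoped Matrix
open Matrix

/-- The matrix representation `M(q) = [[A, b],[bᵀ, c]]` of the quadratic function
`q(x) = xᵀAx + 2bᵀx + c`, as a symmetric matrix indexed by `Fin n ⊕ Unit`. -/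
def Mrep {n : ℕ} (A : Matrix (Fin n) (Fin n) ℝ) (b : Fin n → ℝ) (c : ℝ) :
    Matrix (Fin n ⊕ Unit) (Fin n ⊕ Unit) ℝ :=
  Matrix.fromBlocks A (Matrix.of fun i (_ : Unit) => b i)
    (Matrix.of fun (_ : Unit) j => b j) (Matrix.of fun (_ : Unit) (_ : Unit) => c)


noncomputable def qf {ι : Type*} [Fintype ι] (M : Matrix ι ι ℝ) (z : ι → ℝ) : ℝ := z ⬝ᵥ M *ᵥ z

variable {ι : Type*} [Fintype ι]

lemma qf_smul (M : Matrix ι ι ℝ) (c : ℝ) (z : ι → ℝ) : qf M (c • z) = c^2 * qf M z := by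
  simp [qf, Matrix.mulVec_smul, smul_dotProduct, dotProduct_smul]
  ring

lemma bilin_comm {M : Matrix ι ι ℝ} (hM : M.IsSymm) (u v : ι → ℝ) :
    u ⬝ᵥ M *ᵥ v = v ⬝ᵥ M *ᵥ u := by
  simp only [dotProduct, Matrix.mulVec, Finset.mul_sum]
  rw [Finset.sum_comm]
  refine Finset.sum_congr rfl fun i _ => Finset.sum_congr rfl fun j _ => ?_
  rw [hM.apply i j]; ring

lemma qf_comb {M : Matrix ι ι ℝ} (hM : M.IsSymm) (a b : ℝ) (u v : ι → ℝ) :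
    qf M (a • u + b • v) = a^2 * qf M u + 2*a*b*(u ⬝ᵥ M *ᵥ v) + b^2 * qf M v := by
  simp only [qf, Matrix.mulVec_add, Matrix.mulVec_smul, add_dotProduct,
    dotProduct_add, smul_dotProduct, dotProduct_smul, smul_eq_mul]
  rw [bilin_comm hM v u]; ring

lemma cone_mem (M1 M2 : Matrix ι ι ℝ) (z : ι → ℝ) {c : ℝ} (hc : 0 ≤ c) :
    ∃ w : ι → ℝ, qf M1 w = c * qf M1 z ∧ qf M2 w = c * qf M2 z := by
  refine ⟨Real.sqrt c • z, ?_, ?_⟩ <;> rw [qf_smul, Real.sq_sqrt hc]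

lemma ker_aux (a bb w1 w2 : ℝ) (hab : a^2+bb^2 ≠ 0) (h : a*w1 + bb*w2 = 0) :
    w1 = ((-bb*w1 + a*w2)/(a^2+bb^2)) * (-bb) ∧ w2 = ((-bb*w1+a*w2)/(a^2+bb^2)) * a := by
  constructor <;> field_simp
  · linear_combination a * h
  · linear_combination bb * h

lemma dines_exists (M1 M2 : Matrix ι ι ℝ) (h1 : M1.IsSymm) (h2 : M2.IsSymm)
    (u v : ι → ℝ) (t : ℝ) (ht0 : 0 ≤ t) (ht1 : t ≤ 1) :
    ∃ w : ι → ℝ, qf M1 w = (1-t) * qf M1 u + t * qf M1 v ∧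
      qf M2 w = (1-t) * qf M2 u + t * qf M2 v := by
  set fu := qf M1 u with hfu
  set gu := qf M2 u with hgu
  set fv := qf M1 v with hfv
  set gv := qf M2 v with hgv
  by_cases hd : fu * gv - fv * gu = 0
  · -- collinear case
    by_cases hp0 : fu = 0 ∧ gu = 0
    · obtain ⟨w, hw1, hw2⟩ := cone_mem M1 M2 v ht0
      exact ⟨w, by rw [hw1, hp0.1]; ring, by rw [hw2, hp0.2]; ring⟩
    by_cases hq0 : fv = 0 ∧ gv = 0
    · have h1t : (0:ℝ) ≤ 1 - t := by linarith
      obtain ⟨w, hw1, hw2⟩ := cone_mem M1 M2 u h1t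
      exact ⟨w, by rw [hw1, hq0.1]; ring, by rw [hw2, hq0.2]; ring⟩
    · obtain ⟨κ, hκ1, hκ2⟩ : ∃ κ : ℝ, fv = κ * fu ∧ gv = κ * gu := by
        by_cases hfu0 : fu = 0
        · have hgu0 : gu ≠ 0 := fun h => hp0 ⟨hfu0, h⟩
          have hfv0 : fv = 0 := by
            have hz : fv * gu = 0 := by rw [hfu0] at hd; linarith
            rcases mul_eq_zero.mp hz with h | h
            · exact h
            · exact absurd h hgu0
          exact ⟨gv / gu, by rw [hfv0, hfu0]; ring, by field_simp⟩
        · refine ⟨fv / fu, by field_simp, ?_⟩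
          rw [div_mul_eq_mul_div, eq_div_iff hfu0]
          linear_combination hd
      rcases le_or_gt 0 ((1-t) + t * κ) with hκpos | hκneg
      · obtain ⟨w, hw1, hw2⟩ := cone_mem M1 M2 u hκpos
        exact ⟨w, by rw [hw1, hκ1]; ring, by rw [hw2, hκ2]; ring⟩
      · have hκneg' : κ < 0 := by nlinarith
        have hfrac : 0 ≤ ((1-t) + t*κ)/κ := div_nonneg_iff.mpr (Or.inr ⟨hκneg.le, hκneg'.le⟩)
        obtain ⟨w, hw1, hw2⟩ := cone_mem M1 M2 v hfrac
        refine ⟨w, ?_, ?_⟩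
        · rw [hw1, ← hfv, hκ1]; field_simp [hκneg'.ne]
        · rw [hw2, ← hgv, hκ2]; field_simp [hκneg'.ne]
  · -- main case: d ≠ 0
    set a := gv - gu with ha
    set bb := fu - fv with hbb
    set d := fu * gv - fv * gu with hdd
    have hab : a^2 + bb^2 ≠ 0 := by
      intro h
      have ha0 : a = 0 := by nlinarith [sq_nonneg a, sq_nonneg bb]
      have hb0 : bb = 0 := by nlinarith [sq_nonneg a, sq_nonneg bb]
      apply hd
      rw [ha] at ha0; rw [hbb] at hb0
      linear_combination fu * ha0 + gu * hb0
    -- choose sign of v so that cross term has the right sign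
    obtain ⟨w0, hw01, hw02, hcross⟩ :
        ∃ w0 : ι → ℝ, qf M1 w0 = fv ∧ qf M2 w0 = gv ∧
          0 ≤ d * (a * (u ⬝ᵥ M1 *ᵥ w0) + bb * (u ⬝ᵥ M2 *ᵥ w0)) := by
      rcases le_or_gt 0 (d * (a * (u ⬝ᵥ M1 *ᵥ v) + bb * (u ⬝ᵥ M2 *ᵥ v))) with h | h
      · exact ⟨v, rfl, rfl, h⟩
      · refine ⟨-v, ?_, ?_, ?_⟩
        · rw [show -v = (-1 : ℝ) • v by simp, qf_smul]; rw [hfv]; ring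
        · rw [show -v = (-1 : ℝ) • v by simp, qf_smul]; rw [hgv]; ring
        · simp only [Matrix.mulVec_neg, dotProduct_neg]
          nlinarith
    set B1 := u ⬝ᵥ M1 *ᵥ w0 with hB1
    set B2 := u ⬝ᵥ M2 *ᵥ w0 with hB2
    set cross := a * B1 + bb * B2 with hcr
    set lam : ℝ → ℝ := fun θ => ((1-θ)^2 + θ^2)*d + 2*θ*(1-θ)*cross with hlam
    set p1 : ℝ → ℝ := fun θ => (1-θ)^2*fu + 2*(1-θ)*θ*B1 + θ^2*fv with hp1
    set p2 : ℝ → ℝ := fun θ => (1-θ)^2*gu + 2*(1-θ)*θ*B2 + θ^2*gv with hp2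
    have hdlam : ∀ θ ∈ Set.Icc (0:ℝ) 1, 0 < d * lam θ := by
      intro θ hθ
      obtain ⟨h0, h1'⟩ := hθ
      have hd2 : 0 < d^2 := by positivity
      simp only [hlam]
      nlinarith [sq_nonneg (1-2*θ), mul_nonneg (mul_nonneg h0 (by linarith : (0:ℝ) ≤ 1-θ)) hcross]
    have hlamne : ∀ θ ∈ Set.Icc (0:ℝ) 1, lam θ ≠ 0 := by
      intro θ hθ h
      have := hdlam θ hθ
      rw [h, mul_zero] at this
      exact lt_irrefl 0 this
    set σ : ℝ → ℝ := fun θ => (-bb*(d*p1 θ/lam θ - fu) + a*(d*p2 θ/lam θ - gu))/(a^2+bb^2)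
      with hσ
    have hcont : ContinuousOn σ (Set.Icc (0:ℝ) 1) := by
      apply ContinuousOn.div_const
      apply ContinuousOn.add
      · apply ContinuousOn.mul continuousOn_const
        apply ContinuousOn.sub ?_ continuousOn_const
        exact ContinuousOn.div (by fun_prop) (by fun_prop) hlamne
      · apply ContinuousOn.mul continuousOn_const
        apply ContinuousOn.sub ?_ continuousOn_const
        exact ContinuousOn.div (by fun_prop) (by fun_prop) hlamne
    have hlam0 : lam 0 = d := by simp [hlam]
    have hlam1 : lam 1 = d := by simp [hlam]
    have hσ0 : σ 0 = 0 := by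
      simp only [hσ, hlam0, hp1, hp2]
      norm_num
      left
      rw [mul_div_cancel_left₀ _ hd, mul_div_cancel_left₀ _ hd]
      ring
    have hσ1 : σ 1 = 1 := by
      simp only [hσ, hlam1, hp1, hp2]
      norm_num
      rw [mul_div_cancel_left₀ _ hd, mul_div_cancel_left₀ _ hd, div_eq_one_iff_eq hab]
      rw [ha, hbb]
      ring
    obtain ⟨θ, hθmem, hθeq⟩ : ∃ θ ∈ Set.Icc (0:ℝ) 1, σ θ = t := by
      have hsub := intermediate_value_Icc (zero_le_one) hcont
      have : t ∈ Set.Icc (σ 0) (σ 1) := by rw [hσ0, hσ1]; exact ⟨ht0, ht1⟩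
      obtain ⟨θ, hθ, hθe⟩ := hsub this
      exact ⟨θ, hθ, hθe⟩
    have hlθ := hlamne θ hθmem
    have hz1 : qf M1 ((1-θ) • u + θ • w0) = p1 θ := by
      rw [qf_comb h1, hw01, ← hB1, ← hfu, hp1]
    have hz2 : qf M2 ((1-θ) • u + θ • w0) = p2 θ := by
      rw [qf_comb h2, hw02, ← hB2, ← hgu, hp2]
    have hpos : 0 < d / lam θ := by
      rcases mul_pos_iff.mp (hdlam θ hθmem) with ⟨hx, hy⟩ | ⟨hx, hy⟩
      · exact div_pos hx hy
      · exact div_pos_of_neg_of_neg hx hy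
    obtain ⟨w, hw1, hw2⟩ := cone_mem M1 M2 ((1-θ) • u + θ • w0) hpos.le
    rw [hz1] at hw1
    rw [hz2] at hw2
    -- identify the point
    have hker : a * (d * p1 θ / lam θ - fu) + bb * (d * p2 θ / lam θ - gu) = 0 := by
      have hap : a * p1 θ + bb * p2 θ = lam θ := by
        simp only [hp1, hp2, hlam, hcr, ha, hbb, hdd]
        ring
      field_simp
      linear_combination d * hap + (lam θ) * (by rw [ha, hbb, hdd]; ring :
        a * fu + bb * gu = d)
    obtain ⟨hk1, hk2⟩ := ker_aux a bb (d * p1 θ / lam θ - fu) (d * p2 θ / lam θ - gu) hab hker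
    have hσθ : (-bb*(d*p1 θ/lam θ - fu) + a*(d*p2 θ/lam θ - gu))/(a^2+bb^2) = t := hθeq
    rw [hσθ] at hk1 hk2
    refine ⟨w, ?_, ?_⟩
    · rw [hw1]
      have : d / lam θ * p1 θ = d * p1 θ / lam θ := by ring
      rw [this, show d * p1 θ / lam θ = fu + t * (-bb) by linarith [hk1], hbb]
      ring
    · rw [hw2]
      have : d / lam θ * p2 θ = d * p2 θ / lam θ := by ring
      rw [this, show d * p2 θ / lam θ = gu + t * a by linarith [hk2], ha]
      ring

lemma qf_Mrep {n : ℕ} (A : Matrix (Fin n) (Fin n) ℝ) (b : Fin n → ℝ) (c : ℝ)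
    (x : Fin n → ℝ) (t : ℝ) :
    qf (Mrep A b c) (Sum.elim x fun _ => t) = x ⬝ᵥ A *ᵥ x + 2*t*(b ⬝ᵥ x) + t^2*c := by
  simp only [qf, Mrep, dotProduct, Matrix.mulVec, Fintype.sum_sum_type,
    Matrix.fromBlocks_apply₁₁, Matrix.fromBlocks_apply₁₂, Matrix.fromBlocks_apply₂₁,
    Matrix.fromBlocks_apply₂₂, Sum.elim_inl, Sum.elim_inr, Matrix.of_apply,
    Finset.univ_unique, Finset.sum_singleton]
  simp only [mul_add, Finset.sum_add_distrib]
  have hbx : ∑ i, x i * (b i * t) = t * ∑ i, b i * x i := by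
    rw [Finset.mul_sum]; exact Finset.sum_congr rfl fun i _ => by ring
  rw [hbx]
  ring

lemma Mrep_isSymm {n : ℕ} {A : Matrix (Fin n) (Fin n) ℝ} (hA : A.IsSymm)
    (b : Fin n → ℝ) (c : ℝ) : (Mrep A b c).IsSymm := by
  show _ᵀ = _
  ext (i|i) (j|j) <;> simp [Mrep, Matrix.transpose_apply, hA.apply]

lemma isHermitian_of_isSymm' {ι : Type*} (M : Matrix ι ι ℝ) (h : M.IsSymm) : M.IsHermitian := by
  rwa [Matrix.IsHermitian, Matrix.conjTranspose_eq_transpose_of_trivial]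

lemma qf_sub_smul {ι : Type*} [Fintype ι] (M1 M2 : Matrix ι ι ℝ) (η : ℝ) (z : ι → ℝ) :
    z ⬝ᵥ (M1 - η • M2) *ᵥ z = qf M1 z - η * qf M2 z := by
  simp [qf, Matrix.sub_mulVec, Matrix.smul_mulVec, dotProduct_sub,
    dotProduct_smul, smul_eq_mul]

lemma dot_smul_smul {ι : Type*} [Fintype ι] (M : Matrix ι ι ℝ) (l : ℝ) (x : ι → ℝ) :
    (l • x) ⬝ᵥ M *ᵥ (l • x) = l^2 * (x ⬝ᵥ M *ᵥ x) := by
  simp [Matrix.mulVec_smul, smul_dotProduct, dotProduct_smul]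
  ring

lemma dot_smul_right {ι : Type*} [Fintype ι] (b : ι → ℝ) (l : ℝ) (x : ι → ℝ) :
    b ⬝ᵥ (l • x) = l * (b ⬝ᵥ x) := by
  simp [dotProduct_smul]

lemma eventually_pos (α β γ : ℝ) (hα : 0 < α) :
    ∀ l, max 1 ((|β| + |γ| + 1)/α) ≤ l → 0 < α*l^2 + β*l + γ := by
  intro l hl
  have h1 : 1 ≤ l := le_trans (le_max_left _ _) hl
  have h2 : (|β| + |γ| + 1)/α ≤ l := le_trans (le_max_right _ _) hl
  have h3 : |β| + |γ| + 1 ≤ α * l := by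
    rw [div_le_iff₀ hα] at h2; linarith
  nlinarith [mul_nonneg (by linarith [neg_abs_le β] : (0:ℝ) ≤ |β| + β) (by linarith : (0:ℝ) ≤ l),
    mul_nonneg (abs_nonneg γ) (by linarith : (0:ℝ) ≤ l - 1),
    mul_le_mul_of_nonneg_right h3 (by linarith : (0:ℝ) ≤ l),
    neg_abs_le γ, neg_abs_le β]

/-- S-lemma, Yakubovich. Let `q(x) = xᵀAx + 2bᵀx + c` be a
quadratic function on `ℝⁿ` that is strictly positive somewhere, and
`D = {x : q(x) ≥ 0}`. Then `h(x) = xᵀPx + 2rᵀx + s` is nonnegative on `D` iff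
there exists `η ≥ 0` with `M(h) − ηM(q) ⪰ 0`. -/
theorem s_lemma {n : ℕ}
    (A P : Matrix (Fin n) (Fin n) ℝ) (hA : A.IsSymm) (hP : P.IsSymm)
    (b r : Fin n → ℝ) (c s : ℝ)
    (hslater : ∃ x : Fin n → ℝ, 0 < x ⬝ᵥ A.mulVec x + 2 * (b ⬝ᵥ x) + c) :
    (∀ x : Fin n → ℝ, 0 ≤ x ⬝ᵥ A.mulVec x + 2 * (b ⬝ᵥ x) + c →
        0 ≤ x ⬝ᵥ P.mulVec x + 2 * (r ⬝ᵥ x) + s) ↔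
      ∃ η : ℝ, 0 ≤ η ∧ (Mrep P r s - η • Mrep A b c).PosSemidef := by
  constructor
  · intro hpos
    -- Step 1: homogenized implication
    have key : ∀ z : (Fin n ⊕ Unit) → ℝ,
        0 < qf (Mrep A b c) z → 0 ≤ qf (Mrep P r s) z := by
      intro z hz
      have hzeq : z = Sum.elim (fun i => z (Sum.inl i)) (fun _ => z (Sum.inr ())) := by
        funext i; rcases i with i | ⟨⟩ <;> rfl
      set x : Fin n → ℝ := fun i => z (Sum.inl i) with hx
      set t : ℝ := z (Sum.inr ()) with htdef
      rw [hzeq, qf_Mrep] at hz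
      rw [hzeq, qf_Mrep]
      by_cases ht : t = 0
      · rw [ht] at hz ⊢
        norm_num at hz ⊢
        by_contra hneg
        push_neg at hneg
        set L := max (max 1 ((|2*(b ⬝ᵥ x)| + |c| + 1)/(x ⬝ᵥ A *ᵥ x)))
          (max 1 ((|(-(2*(r ⬝ᵥ x)))| + |(-s)| + 1)/(-(x ⬝ᵥ P *ᵥ x)))) with hL
        have hq' := eventually_pos (x ⬝ᵥ A *ᵥ x) (2*(b ⬝ᵥ x)) c hz L (le_max_left _ _)
        have hh' := eventually_pos (-(x ⬝ᵥ P *ᵥ x)) (-(2*(r ⬝ᵥ x))) (-s)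
          (by linarith) L (le_max_right _ _)
        have happ := hpos (L • x) (by rw [dot_smul_smul, dot_smul_right]; nlinarith)
        rw [dot_smul_smul, dot_smul_right] at happ
        nlinarith
      · set y : Fin n → ℝ := t⁻¹ • x with hy
        have hxy : x = t • y := by
          rw [hy, smul_smul, mul_inv_cancel₀ ht, one_smul]
        rw [hxy, dot_smul_smul, dot_smul_right] at hz ⊢
        have ht2 : 0 < t^2 := lt_of_le_of_ne (sq_nonneg t) (Ne.symm (pow_ne_zero 2 ht))
        have hqy : 0 < y ⬝ᵥ A *ᵥ y + 2*(b ⬝ᵥ y) + c := by nlinarith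
        have hhy := hpos y hqy.le
        nlinarith
    -- Step 2: separation
    set M1 := Mrep A b c with hM1
    set M2 := Mrep P r s with hM2
    set W : Set (ℝ × ℝ) := {p | ∃ z : (Fin n ⊕ Unit) → ℝ, p = (qf M1 z, qf M2 z)} with hWdef
    have hWcvx : Convex ℝ W := by
      rintro p ⟨zp, rfl⟩ q' ⟨zq, rfl⟩ t1 t2 ht1 ht2 hsum
      obtain ⟨w, hw1, hw2⟩ := dines_exists M1 M2 (Mrep_isSymm hA b c) (Mrep_isSymm hP r s)
        zp zq t2 ht2 (by linarith)
      refine ⟨w, ?_⟩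
      have h1t : t1 = 1 - t2 := by linarith
      rw [Prod.ext_iff]
      constructor <;> simp only [Prod.fst_add, Prod.snd_add, Prod.smul_fst, Prod.smul_snd,
        smul_eq_mul]
      · rw [hw1, h1t]
      · rw [hw2, h1t]
    set C : Set (ℝ × ℝ) := {p | 0 < p.1 ∧ p.2 < 0} with hCdef
    have hCcvx : Convex ℝ C :=
      ((convex_Ioi (0:ℝ)).linear_preimage (LinearMap.fst ℝ ℝ ℝ)).inter
        ((convex_Iio (0:ℝ)).linear_preimage (LinearMap.snd ℝ ℝ ℝ))
    have hCopen : IsOpen C :=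
      IsOpen.inter (isOpen_lt continuous_const continuous_fst)
        (isOpen_lt continuous_snd continuous_const)
    have hdisj : Disjoint C W := by
      rw [Set.disjoint_left]
      rintro p ⟨hp1, hp2⟩ ⟨z, rfl⟩
      exact absurd (key z hp1) (not_le.mpr hp2)
    obtain ⟨f, γ, hfC, hfW⟩ := geometric_hahn_banach_open hCcvx hCopen hWcvx hdisj
    set μ := f (1, 0) with hμdef
    set ν := f (0, 1) with hνdef
    have hf : ∀ p : ℝ × ℝ, f p = μ * p.1 + ν * p.2 := by
      intro p
      have hpe : p = p.1 • ((1:ℝ),(0:ℝ)) + p.2 • ((0:ℝ),(1:ℝ)) := by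
        rw [Prod.ext_iff]; simp
      calc f p = f (p.1 • ((1:ℝ),(0:ℝ)) + p.2 • ((0:ℝ),(1:ℝ))) := by rw [← hpe]
        _ = μ * p.1 + ν * p.2 := by
            rw [map_add, f.map_smul, f.map_smul, smul_eq_mul, smul_eq_mul]; ring
    have hγle : γ ≤ 0 := by
      have h0W : ((0:ℝ),(0:ℝ)) ∈ W := ⟨0, by simp [qf]⟩
      have h := hfW _ h0W
      rw [hf] at h
      simpa using h
    have hQH : ∀ z, 0 ≤ μ * (qf M1 z) + ν * (qf M2 z) := by
      intro z
      by_contra hneg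
      push_neg at hneg
      set E := μ * qf M1 z + ν * qf M2 z with hE
      have hEneg : E < 0 := hneg
      have hEne : E ≠ 0 := ne_of_lt hEneg
      set τ := (|γ| + 1)/(-E) with hτdef
      have hτ : 0 < τ := div_pos (by positivity) (by linarith)
      obtain ⟨w, hw1, hw2⟩ := cone_mem M1 M2 z hτ.le
      have h := hfW _ (⟨w, rfl⟩ : ((qf M1 w), (qf M2 w)) ∈ W)
      rw [hf] at h
      simp only at h
      rw [hw1, hw2] at h
      have hτE : μ*(τ * qf M1 z) + ν*(τ * qf M2 z) = τ * E := by rw [hE]; ring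
      have hτEv : τ * E = -(|γ|+1) := by
        rw [hτdef, div_mul_eq_mul_div, div_eq_iff (by linarith : -E ≠ 0)]; ring
      rw [hτE, hτEv] at h
      have := neg_abs_le γ
      linarith
    have hν : 0 ≤ ν := by
      by_contra hν'
      push_neg at hν'
      set v := min (-1 : ℝ) ((γ - μ)/ν) with hv
      have hv0 : v < 0 := lt_of_le_of_lt (min_le_left _ _) (by norm_num)
      have hvle : v ≤ (γ - μ)/ν := min_le_right _ _
      have h2 : γ - μ ≤ ν * v := by
        rw [le_div_iff_of_neg hν'] at hvle
        linarith [hvle]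
      have h := hfC (1, v) ⟨one_pos, hv0⟩
      rw [hf] at h
      simp only at h
      linarith
    have hμ : μ ≤ 0 := by
      by_contra hμ'
      push_neg at hμ'
      set u := max 1 ((γ + ν)/μ + 1) with hu
      have hu0 : 0 < u := lt_of_lt_of_le one_pos (le_max_left _ _)
      have h := hfC (u, -1) ⟨hu0, by norm_num⟩
      rw [hf] at h
      simp only at h
      have h2 : (γ + ν)/μ + 1 ≤ u := le_max_right _ _
      have h3 : γ + ν < μ * u := by
        have h4 : (γ + ν)/μ < u := by linarith
        have h5 := (div_lt_iff₀ hμ').mp h4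
        linarith
      linarith
    by_cases hν0 : ν = 0
    · exfalso
      have hμ0 : μ ≠ 0 := by
        intro h0
        have h := hfC (1, -1) ⟨one_pos, by norm_num⟩
        rw [hf] at h
        simp only [h0, hν0] at h
        norm_num at h
        linarith
      have hμneg : μ < 0 := lt_of_le_of_ne hμ hμ0
      obtain ⟨x₀, hx₀⟩ := hslater
      have h := hQH (Sum.elim x₀ (fun _ => (1:ℝ)))
      rw [hM1, hM2, qf_Mrep, qf_Mrep, hν0] at h
      norm_num at h
      nlinarith
    · have hνpos : 0 < ν := lt_of_le_of_ne hν (Ne.symm hν0)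
      refine ⟨-μ/ν, div_nonneg (neg_nonneg.mpr hμ) hν, Matrix.PosSemidef.of_dotProduct_mulVec_nonneg ?_ ?_⟩
      · apply isHermitian_of_isSymm'
        show _ᵀ = _
        rw [Matrix.transpose_sub, Matrix.transpose_smul]
        rw [show (Mrep P r s)ᵀ = Mrep P r s from Mrep_isSymm hP r s,
          show (Mrep A b c)ᵀ = Mrep A b c from Mrep_isSymm hA b c]
      · intro z
        have hstar : star z = z := by
          funext i; simp
        rw [hstar, qf_sub_smul]
        have h1 := hQH z
        have h2 : μ = -(-μ/ν) * ν := by field_simp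
        rw [h2] at h1
        nlinarith [h1, hνpos]
  · rintro ⟨η, hη, hpsd⟩ x hq
    have h := hpsd.dotProduct_mulVec_nonneg (Sum.elim x (fun _ : Unit => (1:ℝ)))
    have hstar : star (Sum.elim x (fun _ : Unit => (1:ℝ))) = Sum.elim x (fun _ : Unit => (1:ℝ)) := by
      funext i; simp
    rw [hstar, qf_sub_smul, qf_Mrep, qf_Mrep] at h
    norm_num at h
    nlinarith [mul_nonneg hη hq]
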